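/- Let D ∈ ℚ[[w, z, ℏ]] be the formal power series D(w,z) = exp((w³+z³)ℏ/24) · ∑_{n≥0} (n!/(2n+1)!) · (½·w·z·(w+z)·ℏ)^n. Suppose A ∈ ℚ[[w, z, ℏ]] is symmetric under interchanging w and z, satisfies A(0,z) = exp(z³ℏ/24), and satisfies the equation (2w·∂_w + 1)((w+z)·A(w,z)) = w·A(w,z) + ¼·(w+z)³·w·ℏ·A(w,z) + A(w,0)·z·A(0,z) + 2w·A(w,0)·A(0,z). Then A = D. -/

import Mathlib

noncomputable section

/-- The ring `ℚ[[w, z, ℏ]]` of formal power series in three variables. -/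
abbrev R3 : Type := MvPowerSeries (Fin 3) ℚ

/-- The variable `w`. -/
def W : R3 := MvPowerSeries.X 0
/-- The variable `z`. -/
def Z : R3 := MvPowerSeries.X 1
/-- The variable `ℏ`. -/
def H : R3 := MvPowerSeries.X 2

/-- Total degree of a monomial. -/
def deg (m : Fin 3 →₀ ℕ) : ℕ := m 0 + m 1 + m 2

/-- The formal exponential `exp S = ∑_{n≥0} Sⁿ/n!` of a power series `S`
(intended for `S` with zero constant term, in which case the coefficient of any
monomial `m` only receives contributions from `n ≤ deg m`). -/
def mvExp (S : R3) : R3 := fun m =>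
  ∑ n ∈ Finset.range (deg m + 1), (n.factorial : ℚ)⁻¹ * MvPowerSeries.coeff (R := ℚ) m (S ^ n)

/-- The sum `∑_{n≥0} f n` of a family of power series (intended when the coefficient of
any monomial `m` in `f n` vanishes for `n > deg m`, e.g. when `f n` is divisible by `ℏⁿ`). -/
def seriesSum (f : ℕ → R3) : R3 := fun m =>
  ∑ n ∈ Finset.range (deg m + 1), MvPowerSeries.coeff (R := ℚ) m (f n)

/-- The formal partial derivative `∂_w`, sending `wⁱ zʲ ℏᵏ` to `i·wⁱ⁻¹ zʲ ℏᵏ`. -/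
def dW (f : R3) : R3 := fun m =>
  ((m 0 : ℚ) + 1) * MvPowerSeries.coeff (R := ℚ) (m + Finsupp.single 0 1) f

/-- Setting `z = 0`: keep only the monomials not involving `z`. -/
def setZ0 (f : R3) : R3 := fun m => if m 1 = 0 then MvPowerSeries.coeff (R := ℚ) m f else 0

/-- Setting `w = 0`: keep only the monomials not involving `w`. -/
def setW0 (f : R3) : R3 := fun m => if m 0 = 0 then MvPowerSeries.coeff (R := ℚ) m f else 0

/-- Substituting `-z` for `z`: the coefficient of `wⁱ zʲ ℏᵏ` picks up a sign `(-1)ʲ`. -/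
def negZ (f : R3) : R3 := fun m => (-1 : ℚ) ^ (m 1) * MvPowerSeries.coeff (R := ℚ) m f

/-- The automorphism swapping `w` and `z`, on the level of coefficients. -/
def swapWZ (f : R3) : R3 := fun m =>
  MvPowerSeries.coeff (R := ℚ) (Finsupp.equivMapDomain (Equiv.swap (0 : Fin 3) 1) m) f

/-- Dijkgraaf's two-point function
`D(w,z) = exp((w³+z³)ℏ/24) · ∑_{n≥0} (n!/(2n+1)!) (½ w z (w+z) ℏ)ⁿ`. -/
def Dser : R3 :=
  mvExp (MvPowerSeries.C (σ := Fin 3) (R := ℚ) (1 / 24) * (W ^ 3 + Z ^ 3) * H) *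
    seriesSum fun n =>
      MvPowerSeries.C (σ := Fin 3) (R := ℚ) ((n.factorial : ℚ) / ((2 * n + 1).factorial : ℚ)) *
        (MvPowerSeries.C (σ := Fin 3) (R := ℚ) (1 / 2) * W * Z * (W + Z) * H) ^ n


open Finset MvPowerSeries

local notation "cf" => MvPowerSeries.coeff (R := ℚ)
local notation "Cc" => MvPowerSeries.C (σ := Fin 3) (R := ℚ)

def e0 : Fin 3 →₀ ℕ := Finsupp.single 0 1
def e1 : Fin 3 →₀ ℕ := Finsupp.single 1 1

lemma coeff_def (m : Fin 3 →₀ ℕ) (F : R3) : cf m F = F m := rfl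

lemma deg_add (p q : Fin 3 →₀ ℕ) : deg (p + q) = deg p + deg q := by
  simp only [deg, Finsupp.add_apply]; ring

lemma deg_e0 : deg e0 = 1 := by simp [deg, e0]
lemma deg_e1 : deg e1 = 1 := by simp [deg, e1]

lemma deg_left_le {p q m : Fin 3 →₀ ℕ} (h : p + q = m) : deg p ≤ deg m := by
  rw [← h, deg_add]; omega

lemma deg_right_le {p q m : Fin 3 →₀ ℕ} (h : p + q = m) : deg q ≤ deg m := by
  rw [← h, deg_add]; omega

/-- `F` has all monomials of total degree at least `a`. -/
def lb (a : ℕ) (F : R3) : Prop := ∀ m, deg m < a → cf m F = 0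

lemma lb_mono {a b : ℕ} {F : R3} (h : lb a F) (hba : b ≤ a) : lb b F :=
  fun m hm => h m (lt_of_lt_of_le hm hba)

lemma lb_zero (F : R3) : lb 0 F := fun _ hm => absurd hm (Nat.not_lt_zero _)

lemma lb_add {a : ℕ} {F G : R3} (hF : lb a F) (hG : lb a G) : lb a (F + G) := by
  intro m hm; rw [map_add, hF m hm, hG m hm, add_zero]

lemma lb_mul {a b : ℕ} {F G : R3} (hF : lb a F) (hG : lb b G) : lb (a + b) (F * G) := by
  intro m hm
  rw [MvPowerSeries.coeff_mul]
  apply Finset.sum_eq_zero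
  intro x hx
  rw [Finset.HasAntidiagonal.mem_antidiagonal] at hx
  have hd : deg x.1 + deg x.2 = deg m := by rw [← deg_add, hx]
  rcases lt_or_ge (deg x.1) a with h1 | h1
  · rw [hF x.1 h1, zero_mul]
  · rw [hG x.2 (by omega), mul_zero]

lemma lb_X (i : Fin 3) : lb 1 (MvPowerSeries.X i : R3) := by
  intro m hm
  rw [MvPowerSeries.coeff_X]
  have : m ≠ Finsupp.single i 1 := by
    intro h
    subst h
    fin_cases i <;> simp [deg, Finsupp.single_apply] at hm
  simp [this]

lemma lb_W : lb 1 W := lb_X 0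
lemma lb_Z : lb 1 Z := lb_X 1
lemma lb_H : lb 1 H := lb_X 2

lemma lb_pow {a : ℕ} {F : R3} (hF : lb a F) (n : ℕ) : lb (a * n) (F ^ n) := by
  induction n with
  | zero => exact lb_zero _
  | succ n ih =>
    have := lb_mul ih hF
    rw [← pow_succ] at this
    exact lb_mono this (by ring_nf; omega)

lemma lb_dW {a : ℕ} {F : R3} (hF : lb (a + 1) F) : lb a (dW F) := by
  intro m hm
  show ((m 0 : ℚ) + 1) * cf (m + e0) F = 0
  rw [hF (m + e0) (by rw [deg_add, deg_e0]; omega), mul_zero]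

/-- seriesSum is the genuine sum when `f` satisfies `Good`. -/
def Good (f : ℕ → R3) : Prop := ∀ n, lb n (f n)

lemma coeff_seriesSum (m : Fin 3 →₀ ℕ) (f : ℕ → R3) :
    cf m (seriesSum f) = ∑ n ∈ Finset.range (deg m + 1), cf m (f n) := rfl

lemma coeff_seriesSum_of {f : ℕ → R3} (hf : Good f) (m : Fin 3 →₀ ℕ) {N : ℕ}
    (hN : deg m < N) : cf m (seriesSum f) = ∑ n ∈ Finset.range N, cf m (f n) := by
  rw [coeff_seriesSum]
  apply Finset.sum_subset
  · intro x hx; rw [Finset.mem_range] at *; omega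
  · intro x _ hx
    rw [Finset.mem_range] at hx
    exact hf x m (by omega)

lemma seriesSum_add (f g : ℕ → R3) :
    seriesSum f + seriesSum g = seriesSum (fun n => f n + g n) := by
  apply MvPowerSeries.ext; intro m
  rw [map_add, coeff_seriesSum, coeff_seriesSum, coeff_seriesSum, ← Finset.sum_add_distrib]
  exact Finset.sum_congr rfl fun n _ => (map_add _ _ _).symm

lemma mul_seriesSum {f : ℕ → R3} (hf : Good f) (G : R3) :
    G * seriesSum f = seriesSum (fun n => G * f n) := by
  apply MvPowerSeries.ext; intro m
  have hg : Good fun n => G * f n := by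
    intro n
    have := lb_mul (lb_zero G) (hf n)
    simpa using this
  rw [coeff_seriesSum_of hg m (Nat.lt_succ_self _), MvPowerSeries.coeff_mul]
  have : ∀ x ∈ Finset.HasAntidiagonal.antidiagonal m,
      cf x.1 G * cf x.2 (seriesSum f)
        = ∑ n ∈ Finset.range (deg m + 1), cf x.1 G * cf x.2 (f n) := by
    intro x hx
    rw [Finset.HasAntidiagonal.mem_antidiagonal] at hx
    rw [coeff_seriesSum_of hf x.2 (Nat.lt_succ_of_le (deg_right_le hx)), Finset.mul_sum]
  rw [Finset.sum_congr rfl this, Finset.sum_comm]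
  exact Finset.sum_congr rfl fun n _ => (MvPowerSeries.coeff_mul _ _ _).symm

lemma seriesSum_shift {f g : ℕ → R3} (hf : ∀ n, lb (n + 1) (f n)) (hg0 : g 0 = 0)
    (hgs : ∀ n, g (n + 1) = f n) : seriesSum f = seriesSum g := by
  apply MvPowerSeries.ext; intro m
  rw [coeff_seriesSum, coeff_seriesSum, Finset.sum_range_succ,
    hf (deg m) m (Nat.lt_succ_self _), add_zero, Finset.sum_range_succ' (fun n => cf m (g n))]
  simp only [hgs, hg0, map_zero, add_zero]

lemma seriesSum_delta (F : R3) :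
    seriesSum (fun n => if n = 0 then F else 0) = F := by
  apply MvPowerSeries.ext; intro m
  rw [coeff_seriesSum]
  have : ∀ n, cf m (if n = 0 then F else 0) = if n = 0 then cf m F else 0 := by
    intro n; split <;> simp
  simp only [this]
  rw [Finset.sum_ite_eq' (Finset.range (deg m + 1)) 0 (fun _ => cf m F)]
  simp

lemma dW_seriesSum {f : ℕ → R3} (hf : ∀ n, 1 ≤ n → lb (n + 1) (f n)) :
    dW (seriesSum f) = seriesSum (fun n => dW (f n)) := by
  apply MvPowerSeries.ext; intro m
  show ((m 0 : ℚ) + 1) * cf (m + e0) (seriesSum f) = _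
  rw [coeff_seriesSum, coeff_seriesSum]
  have hdeg : deg (m + e0) = deg m + 1 := by rw [deg_add, deg_e0]
  rw [hdeg, Finset.mul_sum, Finset.sum_range_succ]
  have hlast : ((m 0 : ℚ) + 1) * cf (m + e0) (f (deg m + 1)) = 0 := by
    rw [hf (deg m + 1) (by omega) (m + e0) (by omega), mul_zero]
  rw [hlast, add_zero]
  rfl

lemma lb_sum {a : ℕ} {s : Finset ℕ} {F : ℕ → R3} (h : ∀ i ∈ s, lb a (F i)) :
    lb a (∑ i ∈ s, F i) := by
  intro m hm
  rw [map_sum]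
  exact Finset.sum_eq_zero fun i hi => h i hi m hm

lemma seriesSum_mul {f g : ℕ → R3} (hf : Good f) (hg : Good g) :
    seriesSum f * seriesSum g
      = seriesSum (fun n => ∑ k ∈ Finset.range (n + 1), f k * g (n - k)) := by
  apply MvPowerSeries.ext; intro m
  set N := deg m + 1 with hN
  have hcau : Good fun n => ∑ k ∈ Finset.range (n + 1), f k * g (n - k) := by
    intro n
    apply lb_sum
    intro k hk
    rw [Finset.mem_range] at hk
    have := lb_mul (hf k) (hg (n - k))
    exact lb_mono this (by omega)
  rw [coeff_seriesSum_of hcau m (Nat.lt_succ_self _), MvPowerSeries.coeff_mul]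
  -- LHS: expand both coefficients
  have step1 : ∀ x ∈ Finset.HasAntidiagonal.antidiagonal m,
      cf x.1 (seriesSum f) * cf x.2 (seriesSum g)
        = ∑ a ∈ Finset.range N, ∑ b ∈ Finset.range N, cf x.1 (f a) * cf x.2 (g b) := by
    intro x hx
    rw [Finset.HasAntidiagonal.mem_antidiagonal] at hx
    rw [coeff_seriesSum_of hf x.1 (Nat.lt_succ_of_le (deg_left_le hx)),
      coeff_seriesSum_of hg x.2 (Nat.lt_succ_of_le (deg_right_le hx)),
      Finset.sum_mul]
    exact Finset.sum_congr rfl fun a _ => Finset.mul_sum _ _ _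
  rw [Finset.sum_congr rfl step1, Finset.sum_comm]
  have step2 : ∀ a ∈ Finset.range N,
      ∑ x ∈ Finset.HasAntidiagonal.antidiagonal m, ∑ b ∈ Finset.range N, cf x.1 (f a) * cf x.2 (g b)
        = ∑ b ∈ Finset.range N, cf m (f a * g b) := by
    intro a _
    rw [Finset.sum_comm]
    exact Finset.sum_congr rfl fun b _ => (MvPowerSeries.coeff_mul _ _ _).symm
  rw [Finset.sum_congr rfl step2]
  -- now: ∑_{a<N} ∑_{b<N} cf m (f a * g b) = ∑_{n<N} ∑_{k≤n} cf m (f k * g (n-k))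
  have hzero : ∀ a b : ℕ, deg m < a + b → cf m (f a * g b) = 0 := by
    intro a b hab
    exact lb_mul (hf a) (hg b) m hab
  rw [← Finset.sum_product']
  have hfilter :
      ∑ p ∈ Finset.range N ×ˢ Finset.range N, cf m (f p.1 * g p.2)
        = ∑ p ∈ (Finset.range N ×ˢ Finset.range N).filter (fun p => p.1 + p.2 < N),
            cf m (f p.1 * g p.2) := by
    symm
    apply Finset.sum_filter_of_ne
    intro p _ hp
    by_contra hc
    exact hp (hzero p.1 p.2 (by omega))
  rw [hfilter]
  have hrhs : ∀ n ∈ Finset.range N,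
      ∑ k ∈ Finset.range (n + 1), cf m (f k * g (n - k))
        = ∑ k ∈ Finset.range (n + 1), cf m (f k * g (n - k)) := fun _ _ => rfl
  rw [Finset.sum_congr rfl (fun n _ => (map_sum (cf m) _ (Finset.range (n+1))))]
  rw [Finset.sum_sigma' (Finset.range N) (fun n => Finset.range (n + 1))
    (fun n k => cf m (f k * g (n - k)))]
  have key := Finset.sum_nbij' (s := (Finset.range N).sigma fun n => Finset.range (n + 1))
    (t := (Finset.range N ×ˢ Finset.range N).filter (fun p => p.1 + p.2 < N))
    (f := fun x => cf m (f x.snd * g (x.fst - x.snd)))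
    (g := fun p => cf m (f p.1 * g p.2))
    (i := fun q => ((q.2, q.1 - q.2) : ℕ × ℕ))
    (j := fun p => (⟨p.1 + p.2, p.1⟩ : Σ _ : ℕ, ℕ))
    (by
      intro q hq
      simp only [Finset.mem_sigma, Finset.mem_range] at hq
      simp only [Finset.mem_filter, Finset.mem_product, Finset.mem_range]
      omega)
    (by
      intro p hp
      simp only [Finset.mem_filter, Finset.mem_product, Finset.mem_range] at hp
      simp only [Finset.mem_sigma, Finset.mem_range]
      omega)
    (by
      intro q hq
      simp only [Finset.mem_sigma, Finset.mem_range] at hq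
      ext
      · simp; omega
      · rfl)
    (by
      intro p hp
      simp only [Finset.mem_filter, Finset.mem_product, Finset.mem_range] at hp
      have h2 : p.1 + p.2 - p.1 = p.2 := by omega
      calc ((fun q : Σ _ : ℕ, ℕ => ((q.2, q.1 - q.2) : ℕ × ℕ))
              ((fun p : ℕ × ℕ => (⟨p.1 + p.2, p.1⟩ : Σ _ : ℕ, ℕ)) p))
          = (p.1, p.1 + p.2 - p.1) := rfl
        _ = (p.1, p.2) := by rw [h2]
        )
    (by intro q _; rfl)
  exact key.symm

lemma e0_at0 : e0 0 = 1 := by simp [e0]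
lemma e1_at1 : e1 1 = 1 := by simp [e1]
lemma e0_at (a : Fin 3) (h : a ≠ 0) : e0 a = 0 := by
  simp [e0, Finsupp.single_apply, Ne.symm h]
lemma e1_at (a : Fin 3) (h : a ≠ 1) : e1 a = 0 := by
  simp [e1, Finsupp.single_apply, Ne.symm h]

lemma coeff_dW (m : Fin 3 →₀ ℕ) (F : R3) :
    cf m (dW F) = ((m 0 : ℚ) + 1) * cf (m + e0) F := rfl

lemma dW_add (F G : R3) : dW (F + G) = dW F + dW G := by
  apply MvPowerSeries.ext; intro m
  rw [map_add, coeff_dW, coeff_dW, coeff_dW, map_add]; ring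

lemma dW_sub (F G : R3) : dW (F - G) = dW F - dW G := by
  apply MvPowerSeries.ext; intro m
  rw [map_sub, coeff_dW, coeff_dW, coeff_dW, map_sub]; ring

lemma dW_Cmul (r : ℚ) (F : R3) : dW (Cc r * F) = Cc r * dW F := by
  apply MvPowerSeries.ext; intro m
  rw [MvPowerSeries.coeff_C_mul, coeff_dW, coeff_dW, MvPowerSeries.coeff_C_mul]; ring

lemma add_e0_ne_zero (m : Fin 3 →₀ ℕ) : m + e0 ≠ 0 := by
  intro h
  have := DFunLike.congr_fun h 0
  simp only [Finsupp.add_apply, e0_at0, Finsupp.coe_zero, Pi.zero_apply] at this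
  omega

lemma dW_one : dW (1 : R3) = 0 := by
  apply MvPowerSeries.ext; intro m
  rw [coeff_dW, MvPowerSeries.coeff_one, if_neg (add_e0_ne_zero m), mul_zero]
  simp

lemma dW_C (r : ℚ) : dW (Cc r : R3) = 0 := by
  have : (Cc r : R3) = Cc r * 1 := by rw [mul_one]
  rw [this, dW_Cmul, dW_one, mul_zero]

lemma sub_e0_add (x : Fin 3 →₀ ℕ) (h : x 0 ≠ 0) : x - e0 + e0 = x := by
  ext a
  simp only [Finsupp.add_apply, Finsupp.tsub_apply]
  rcases eq_or_ne a 0 with ha | ha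
  · subst ha; rw [e0_at0]; omega
  · rw [e0_at a ha]; omega

lemma add_e0_sub (x : Fin 3 →₀ ℕ) : x + e0 - e0 = x := by
  ext a
  simp only [Finsupp.add_apply, Finsupp.tsub_apply]
  omega

lemma sum_shiftL (m : Fin 3 →₀ ℕ) (u v : (Fin 3 →₀ ℕ) → ℚ) :
    ∑ x ∈ Finset.HasAntidiagonal.antidiagonal (m + e0), (x.1 0 : ℚ) * u x.1 * v x.2
      = ∑ x ∈ Finset.HasAntidiagonal.antidiagonal m, ((x.1 0 : ℚ) + 1) * u (x.1 + e0) * v x.2 := by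
  rw [← Finset.sum_filter_of_ne (p := fun x : (Fin 3 →₀ ℕ) × (Fin 3 →₀ ℕ) => x.1 0 ≠ 0)
    (by
      intro x _ hx h0
      apply hx
      rw [h0]
      push_cast
      ring)]
  have key := Finset.sum_nbij'
    (s := (Finset.HasAntidiagonal.antidiagonal (m + e0)).filter (fun x => x.1 0 ≠ 0))
    (t := Finset.HasAntidiagonal.antidiagonal m)
    (f := fun x => (x.1 0 : ℚ) * u x.1 * v x.2)
    (g := fun x => ((x.1 0 : ℚ) + 1) * u (x.1 + e0) * v x.2)
    (i := fun x => (x.1 - e0, x.2))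
    (j := fun x => (x.1 + e0, x.2))
    (by
      intro x hx
      simp only [Finset.mem_filter, Finset.HasAntidiagonal.mem_antidiagonal] at hx
      rw [Finset.HasAntidiagonal.mem_antidiagonal]
      obtain ⟨hsum, h0⟩ := hx
      ext a
      have := DFunLike.congr_fun hsum a
      simp only [Finsupp.add_apply, Finsupp.tsub_apply] at *
      rcases eq_or_ne a 0 with h | h
      · subst h; rw [e0_at0] at this ⊢; omega
      · rw [e0_at a h] at this ⊢; omega)
    (by
      intro x hx
      rw [Finset.HasAntidiagonal.mem_antidiagonal] at hx
      simp only [Finset.mem_filter, Finset.HasAntidiagonal.mem_antidiagonal]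
      constructor
      · rw [← hx]; ext a; simp only [Finsupp.add_apply]; ring
      · simp only [Finsupp.add_apply, e0_at0]; omega)
    (by
      intro x hx
      simp only [Finset.mem_filter, Finset.HasAntidiagonal.mem_antidiagonal] at hx
      calc ((x.1 - e0 + e0, x.2) : _ × _) = (x.1, x.2) := by rw [sub_e0_add x.1 hx.2]
        _ = x := rfl)
    (by
      intro x _
      calc ((x.1 + e0 - e0, x.2) : _ × _) = (x.1, x.2) := by rw [add_e0_sub x.1]
        _ = x := rfl)
    (by
      intro x hx
      simp only [Finset.mem_filter, Finset.HasAntidiagonal.mem_antidiagonal] at hx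
      have h2 : ((x.1 - e0) 0 : ℚ) + 1 = (x.1 0 : ℚ) := by
        rw [Finsupp.tsub_apply, e0_at0]
        have h0 := hx.2
        push_cast [Nat.cast_sub (by omega : 1 ≤ x.1 0)]
        ring
      show (x.1 0 : ℚ) * u x.1 * v x.2
          = (((x.1 - e0) 0 : ℚ) + 1) * u (x.1 - e0 + e0) * v x.2
      rw [h2, sub_e0_add x.1 hx.2])
  exact key

lemma sum_shiftR (m : Fin 3 →₀ ℕ) (u v : (Fin 3 →₀ ℕ) → ℚ) :
    ∑ x ∈ Finset.HasAntidiagonal.antidiagonal (m + e0), (x.2 0 : ℚ) * u x.1 * v x.2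
      = ∑ x ∈ Finset.HasAntidiagonal.antidiagonal m, ((x.2 0 : ℚ) + 1) * u x.1 * v (x.2 + e0) := by
  have swap1 : ∀ n : Fin 3 →₀ ℕ, ∀ w : (Fin 3 →₀ ℕ) × (Fin 3 →₀ ℕ) → ℚ,
      ∑ x ∈ Finset.HasAntidiagonal.antidiagonal n, w x = ∑ x ∈ Finset.HasAntidiagonal.antidiagonal n, w (x.2, x.1) := by
    intro n w
    apply Finset.sum_nbij' (i := fun x : (Fin 3 →₀ ℕ) × (Fin 3 →₀ ℕ) => (x.2, x.1))
      (j := fun x : (Fin 3 →₀ ℕ) × (Fin 3 →₀ ℕ) => (x.2, x.1))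
    · intro x hx; rw [Finset.HasAntidiagonal.mem_antidiagonal] at *; rw [← hx]; exact add_comm _ _
    · intro x hx; rw [Finset.HasAntidiagonal.mem_antidiagonal] at *; rw [← hx]; exact add_comm _ _
    · intro x _; rfl
    · intro x _; rfl
    · intro x _; rfl
  rw [swap1 (m + e0) (fun x => (x.2 0 : ℚ) * u x.1 * v x.2)]
  rw [swap1 m (fun x => ((x.2 0 : ℚ) + 1) * u x.1 * v (x.2 + e0))]
  simp only
  calc ∑ x ∈ Finset.HasAntidiagonal.antidiagonal (m + e0), (x.1 0 : ℚ) * u x.2 * v x.1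
      = ∑ x ∈ Finset.HasAntidiagonal.antidiagonal (m + e0), (x.1 0 : ℚ) * v x.1 * u x.2 := by
        apply Finset.sum_congr rfl; intro x _; ring
    _ = ∑ x ∈ Finset.HasAntidiagonal.antidiagonal m, ((x.1 0 : ℚ) + 1) * v (x.1 + e0) * u x.2 :=
        sum_shiftL m v u
    _ = ∑ x ∈ Finset.HasAntidiagonal.antidiagonal m, ((x.1 0 : ℚ) + 1) * u x.2 * v (x.1 + e0) := by
        apply Finset.sum_congr rfl; intro x _; ring

lemma dW_mul (F G : R3) : dW (F * G) = dW F * G + F * dW G := by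
  apply MvPowerSeries.ext; intro m
  rw [map_add, coeff_dW, MvPowerSeries.coeff_mul, MvPowerSeries.coeff_mul,
    MvPowerSeries.coeff_mul, Finset.mul_sum]
  have step : ∀ x ∈ Finset.HasAntidiagonal.antidiagonal (m + e0),
      ((m 0 : ℚ) + 1) * (cf x.1 F * cf x.2 G)
        = (x.1 0 : ℚ) * cf x.1 F * cf x.2 G + (x.2 0 : ℚ) * cf x.1 F * cf x.2 G := by
    intro x hx
    rw [Finset.HasAntidiagonal.mem_antidiagonal] at hx
    have h0 := DFunLike.congr_fun hx 0
    simp only [Finsupp.add_apply, e0_at0] at h0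
    have hcast : (x.1 0 : ℚ) + (x.2 0 : ℚ) = (m 0 : ℚ) + 1 := by exact_mod_cast h0
    rw [← hcast]; ring
  rw [Finset.sum_congr rfl step, Finset.sum_add_distrib,
    sum_shiftL m (fun p => cf p F) (fun p => cf p G),
    sum_shiftR m (fun p => cf p F) (fun p => cf p G)]
  have hL : ∑ x ∈ Finset.HasAntidiagonal.antidiagonal m, ((x.1 0 : ℚ) + 1) * cf (x.1 + e0) F * cf x.2 G
      = ∑ x ∈ Finset.HasAntidiagonal.antidiagonal m, cf x.1 (dW F) * cf x.2 G := by
    apply Finset.sum_congr rfl; intro x _; rw [coeff_dW]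
  have hR : ∑ x ∈ Finset.HasAntidiagonal.antidiagonal m, ((x.2 0 : ℚ) + 1) * cf x.1 F * cf (x.2 + e0) G
      = ∑ x ∈ Finset.HasAntidiagonal.antidiagonal m, cf x.1 F * cf x.2 (dW G) := by
    apply Finset.sum_congr rfl; intro x _; rw [coeff_dW]; ring
  rw [hL, hR]

lemma single_eq_zero_add_e0 : (Finsupp.single (0 : Fin 3) 1 : Fin 3 →₀ ℕ) = 0 + e0 := by
  rw [zero_add]; rfl

lemma dW_X0 : dW W = 1 := by
  apply MvPowerSeries.ext; intro m
  rw [coeff_dW, MvPowerSeries.coeff_one]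
  unfold W
  rw [MvPowerSeries.coeff_X]
  have heq : (m + e0 = Finsupp.single 0 1) ↔ m = 0 := by
    rw [single_eq_zero_add_e0]
    exact add_left_inj e0
  rcases eq_or_ne m 0 with h | h
  · rw [if_pos (heq.2 h), if_pos h, h]
    simp
  · rw [if_neg (fun hh => h (heq.1 hh)), if_neg h, mul_zero]

lemma dW_X1 : dW Z = 0 := by
  apply MvPowerSeries.ext; intro m
  rw [coeff_dW]
  unfold Z
  rw [MvPowerSeries.coeff_X]
  have hne : m + e0 ≠ Finsupp.single 1 1 := by
    intro h
    have := DFunLike.congr_fun h 0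
    simp only [Finsupp.add_apply, e0_at0, Finsupp.single_apply,
      if_neg (by decide : ¬(1 : Fin 3) = 0)] at this
    omega
  rw [if_neg hne, mul_zero]
  simp

lemma dW_X2 : dW H = 0 := by
  apply MvPowerSeries.ext; intro m
  rw [coeff_dW]
  unfold H
  rw [MvPowerSeries.coeff_X]
  have hne : m + e0 ≠ Finsupp.single 2 1 := by
    intro h
    have := DFunLike.congr_fun h 0
    simp only [Finsupp.add_apply, e0_at0, Finsupp.single_apply,
      if_neg (by decide : ¬(2 : Fin 3) = 0)] at this
    omega
  rw [if_neg hne, mul_zero]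
  simp

lemma dW_pow (F : R3) (n : ℕ) :
    dW (F ^ n) = Cc (n : ℚ) * (F ^ (n - 1) * dW F) := by
  induction n with
  | zero => simp [dW_one]
  | succ n ih =>
    rw [pow_succ, dW_mul, ih]
    rcases Nat.eq_zero_or_pos n with h | h
    · subst h; simp
    · have h1 : n - 1 + 1 = n := by omega
      have h2 : (Cc (((n : ℕ) + 1 : ℕ) : ℚ) : R3) = Cc (n : ℚ) + 1 := by
        push_cast
        rw [map_add, map_one]
      have h4 : F ^ (n - 1) * F = F ^ n := by
        rw [← pow_succ, h1]
      have h5 : Cc (n : ℚ) * (F ^ (n - 1) * dW F) * F = Cc (n : ℚ) * (F ^ n * dW F) := by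
        calc Cc (n : ℚ) * (F ^ (n - 1) * dW F) * F
            = Cc (n : ℚ) * (F ^ (n - 1) * F) * dW F := by ring
          _ = _ := by rw [h4]; ring
      rw [h5, Nat.add_sub_cancel]
      push_cast
      rw [map_add, map_one]
      ring

lemma mvExp_eq (S : R3) :
    mvExp S = seriesSum (fun n => Cc (n.factorial : ℚ)⁻¹ * S ^ n) := by
  apply MvPowerSeries.ext; intro m
  rw [coeff_seriesSum]
  show ∑ n ∈ Finset.range (deg m + 1), (n.factorial : ℚ)⁻¹ * cf m (S ^ n) = _
  exact Finset.sum_congr rfl fun n _ => (MvPowerSeries.coeff_C_mul _ _ _).symm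

lemma good_exp {S : R3} (hS : lb 1 S) : Good fun n => (Cc (n.factorial : ℚ)⁻¹ : R3) * S ^ n := by
  intro n
  have := lb_mul (lb_zero (Cc (n.factorial : ℚ)⁻¹ : R3)) (lb_pow hS n)
  exact lb_mono this (by omega)

lemma dW_mvExp {S : R3} (hS : lb 2 S) : dW (mvExp S) = dW S * mvExp S := by
  have hS1 : lb 1 S := lb_mono hS (by omega)
  have hdS : lb 1 (dW S) := lb_dW hS
  rw [mvExp_eq]
  rw [dW_seriesSum (f := fun n => Cc (n.factorial : ℚ)⁻¹ * S ^ n)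
    (by
      intro n hn
      have h1 : lb (2 * n) ((Cc (n.factorial : ℚ)⁻¹ : R3) * S ^ n) := by
        have := lb_mul (lb_zero (Cc (n.factorial : ℚ)⁻¹ : R3)) (lb_pow hS n)
        simpa using this
      exact lb_mono h1 (by omega))]
  rw [mul_seriesSum (good_exp hS1)]
  symm
  apply seriesSum_shift
    (f := fun n => dW S * (Cc (n.factorial : ℚ)⁻¹ * S ^ n))
    (g := fun n => dW (Cc (n.factorial : ℚ)⁻¹ * S ^ n))
  · intro n
    have h1 : lb (1 + 2 * n) (dW S * ((Cc (n.factorial : ℚ)⁻¹ : R3) * S ^ n)) := by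
      have h2 := lb_mul (lb_zero (Cc (n.factorial : ℚ)⁻¹ : R3)) (lb_pow hS n)
      have := lb_mul hdS (by simpa using h2)
      simpa using this
    exact lb_mono h1 (by omega)
  · rw [dW_Cmul, pow_zero, dW_one, mul_zero]
  · intro n
    rw [dW_Cmul, dW_pow, Nat.add_sub_cancel]
    have hc : (Cc ((n + 1).factorial : ℚ)⁻¹ : R3) * Cc ((n + 1 : ℕ) : ℚ)
        = Cc (n.factorial : ℚ)⁻¹ := by
      rw [← map_mul]
      congr 1
      rw [Nat.factorial_succ]
      have h1 : ((n + 1 : ℕ) : ℚ) ≠ 0 := by positivity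
      have h2 : ((n.factorial : ℕ) : ℚ) ≠ 0 := by
        exact_mod_cast Nat.cast_ne_zero.2 n.factorial_ne_zero
      field_simp
      exact (Nat.cast_mul _ _).symm
    calc (Cc ((n + 1).factorial : ℚ)⁻¹ : R3) * (Cc ((n + 1 : ℕ) : ℚ) * (S ^ n * dW S))
        = (Cc ((n + 1).factorial : ℚ)⁻¹ * Cc ((n + 1 : ℕ) : ℚ)) * (S ^ n * dW S) := by ring
      _ = Cc (n.factorial : ℚ)⁻¹ * (S ^ n * dW S) := by rw [hc]
      _ = dW S * (Cc (n.factorial : ℚ)⁻¹ * S ^ n) := by ring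

lemma mvExp_add {S T : R3} (hS : lb 1 S) (hT : lb 1 T) :
    mvExp (S + T) = mvExp S * mvExp T := by
  rw [mvExp_eq, mvExp_eq, mvExp_eq, seriesSum_mul (good_exp hS) (good_exp hT)]
  apply congrArg seriesSum
  funext n
  have hbin : (S + T) ^ n
      = ∑ k ∈ Finset.range (n + 1), S ^ k * T ^ (n - k) * (n.choose k : R3) := add_pow S T n
  rw [hbin, Finset.mul_sum]
  apply Finset.sum_congr rfl
  intro k hk
  rw [Finset.mem_range] at hk
  have hk' : k ≤ n := by omega
  have hcc : (Cc (n.factorial : ℚ)⁻¹ : R3) * Cc ((n.choose k : ℕ) : ℚ)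
      = Cc (k.factorial : ℚ)⁻¹ * Cc ((n - k).factorial : ℚ)⁻¹ := by
    rw [← map_mul, ← map_mul]
    congr 1
    have hfac := Nat.choose_mul_factorial_mul_factorial hk'
    have hfacq : ((n.choose k : ℕ) : ℚ) * (k.factorial : ℚ) * ((n - k).factorial : ℚ)
        = (n.factorial : ℚ) := by exact_mod_cast hfac
    have h1 : (k.factorial : ℚ) ≠ 0 := Nat.cast_ne_zero.2 k.factorial_ne_zero
    have h2 : ((n - k).factorial : ℚ) ≠ 0 := Nat.cast_ne_zero.2 (n - k).factorial_ne_zero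
    have h3 : (n.factorial : ℚ) ≠ 0 := Nat.cast_ne_zero.2 n.factorial_ne_zero
    field_simp
    linear_combination hfacq
  have hnat : (n.choose k : R3) = Cc ((n.choose k : ℕ) : ℚ) := by
    rw [map_natCast]
  calc (Cc (n.factorial : ℚ)⁻¹ : R3) * (S ^ k * T ^ (n - k) * (n.choose k : R3))
      = (Cc (n.factorial : ℚ)⁻¹ * Cc ((n.choose k : ℕ) : ℚ)) * (S ^ k * T ^ (n - k)) := by
        rw [hnat]; ring
    _ = (Cc (k.factorial : ℚ)⁻¹ * Cc ((n - k).factorial : ℚ)⁻¹) * (S ^ k * T ^ (n - k)) := by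
        rw [hcc]
    _ = Cc (k.factorial : ℚ)⁻¹ * S ^ k * (Cc ((n - k).factorial : ℚ)⁻¹ * T ^ (n - k)) := by
        ring

lemma coeff_setW0 (m : Fin 3 →₀ ℕ) (F : R3) :
    cf m (setW0 F) = if m 0 = 0 then cf m F else 0 := rfl

lemma coeff_setZ0 (m : Fin 3 →₀ ℕ) (F : R3) :
    cf m (setZ0 F) = if m 1 = 0 then cf m F else 0 := rfl

lemma setW0_mul (F G : R3) : setW0 (F * G) = setW0 F * setW0 G := by
  apply MvPowerSeries.ext; intro m
  rw [coeff_setW0, MvPowerSeries.coeff_mul, MvPowerSeries.coeff_mul]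
  rcases eq_or_ne (m 0) 0 with h | h
  · rw [if_pos h]
    apply Finset.sum_congr rfl
    intro x hx
    rw [Finset.HasAntidiagonal.mem_antidiagonal] at hx
    have h0 := DFunLike.congr_fun hx 0
    simp only [Finsupp.add_apply] at h0
    rw [coeff_setW0, coeff_setW0, if_pos (by omega), if_pos (by omega)]
  · rw [if_neg h]
    symm
    apply Finset.sum_eq_zero
    intro x hx
    rw [Finset.HasAntidiagonal.mem_antidiagonal] at hx
    have h0 := DFunLike.congr_fun hx 0
    simp only [Finsupp.add_apply] at h0
    rw [coeff_setW0, coeff_setW0]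
    rcases eq_or_ne (x.2 0) 0 with h2 | h2
    · rw [if_neg (show ¬ x.1 0 = 0 by omega), zero_mul]
    · rw [if_neg h2, mul_zero]

lemma setZ0_mul (F G : R3) : setZ0 (F * G) = setZ0 F * setZ0 G := by
  apply MvPowerSeries.ext; intro m
  rw [coeff_setZ0, MvPowerSeries.coeff_mul, MvPowerSeries.coeff_mul]
  rcases eq_or_ne (m 1) 0 with h | h
  · rw [if_pos h]
    apply Finset.sum_congr rfl
    intro x hx
    rw [Finset.HasAntidiagonal.mem_antidiagonal] at hx
    have h0 := DFunLike.congr_fun hx 1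
    simp only [Finsupp.add_apply] at h0
    rw [coeff_setZ0, coeff_setZ0, if_pos (by omega), if_pos (by omega)]
  · rw [if_neg h]
    symm
    apply Finset.sum_eq_zero
    intro x hx
    rw [Finset.HasAntidiagonal.mem_antidiagonal] at hx
    have h0 := DFunLike.congr_fun hx 1
    simp only [Finsupp.add_apply] at h0
    rw [coeff_setZ0, coeff_setZ0]
    rcases eq_or_ne (x.2 1) 0 with h2 | h2
    · rw [if_neg (show ¬ x.1 1 = 0 by omega), zero_mul]
    · rw [if_neg h2, mul_zero]

lemma setW0_add (F G : R3) : setW0 (F + G) = setW0 F + setW0 G := by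
  apply MvPowerSeries.ext; intro m
  rw [map_add, coeff_setW0, coeff_setW0, coeff_setW0, map_add]
  split <;> simp

lemma setZ0_add (F G : R3) : setZ0 (F + G) = setZ0 F + setZ0 G := by
  apply MvPowerSeries.ext; intro m
  rw [map_add, coeff_setZ0, coeff_setZ0, coeff_setZ0, map_add]
  split <;> simp

lemma setW0_one : setW0 (1 : R3) = 1 := by
  apply MvPowerSeries.ext; intro m
  rw [coeff_setW0, MvPowerSeries.coeff_one]
  rcases eq_or_ne m 0 with h | h
  · subst h; simp
  · rw [if_neg h]; split <;> simp [MvPowerSeries.coeff_one, h]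

lemma setZ0_one : setZ0 (1 : R3) = 1 := by
  apply MvPowerSeries.ext; intro m
  rw [coeff_setZ0, MvPowerSeries.coeff_one]
  rcases eq_or_ne m 0 with h | h
  · subst h; simp
  · rw [if_neg h]; split <;> simp [MvPowerSeries.coeff_one, h]

lemma setW0_C (r : ℚ) : setW0 (Cc r) = Cc r := by
  apply MvPowerSeries.ext; intro m
  rw [coeff_setW0, MvPowerSeries.coeff_C]
  rcases eq_or_ne m 0 with h | h
  · subst h; simp
  · rw [if_neg h]; split <;> simp [MvPowerSeries.coeff_C, h]

lemma setZ0_C (r : ℚ) : setZ0 (Cc r) = Cc r := by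
  apply MvPowerSeries.ext; intro m
  rw [coeff_setZ0, MvPowerSeries.coeff_C]
  rcases eq_or_ne m 0 with h | h
  · subst h; simp
  · rw [if_neg h]; split <;> simp [MvPowerSeries.coeff_C, h]

lemma single_apply_fin (i a : Fin 3) : (Finsupp.single i 1 : Fin 3 →₀ ℕ) a
    = if a = i then 1 else 0 := by
  simp [Finsupp.single_apply, eq_comm]


lemma coeff_zero' (m : Fin 3 →₀ ℕ) : cf m (0 : R3) = 0 := map_zero _

lemma setW0_X0 : setW0 W = 0 := by
  apply MvPowerSeries.ext; intro m
  rw [coeff_setW0, coeff_zero']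
  rcases eq_or_ne (m 0) 0 with h | h
  · rw [if_pos h]
    unfold W
    rw [MvPowerSeries.coeff_X, if_neg (by intro hh; subst hh; simp [single_apply_fin] at h)]
  · rw [if_neg h]

lemma setW0_X1 : setW0 Z = Z := by
  apply MvPowerSeries.ext; intro m
  rw [coeff_setW0]
  rcases eq_or_ne (m 0) 0 with h | h
  · rw [if_pos h]
  · rw [if_neg h]
    unfold Z
    rw [MvPowerSeries.coeff_X,
      if_neg (by intro hh; apply h; subst hh; simp [single_apply_fin])]

lemma setW0_X2 : setW0 H = H := by
  apply MvPowerSeries.ext; intro m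
  rw [coeff_setW0]
  rcases eq_or_ne (m 0) 0 with h | h
  · rw [if_pos h]
  · rw [if_neg h]
    unfold H
    rw [MvPowerSeries.coeff_X,
      if_neg (by intro hh; apply h; subst hh; simp [single_apply_fin])]

lemma setZ0_X0 : setZ0 W = W := by
  apply MvPowerSeries.ext; intro m
  rw [coeff_setZ0]
  rcases eq_or_ne (m 1) 0 with h | h
  · rw [if_pos h]
  · rw [if_neg h]
    unfold W
    rw [MvPowerSeries.coeff_X,
      if_neg (by intro hh; apply h; subst hh; simp [single_apply_fin])]

lemma setZ0_X1 : setZ0 Z = 0 := by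
  apply MvPowerSeries.ext; intro m
  rw [coeff_setZ0, coeff_zero']
  rcases eq_or_ne (m 1) 0 with h | h
  · rw [if_pos h]
    unfold Z
    rw [MvPowerSeries.coeff_X, if_neg (by intro hh; subst hh; simp [single_apply_fin] at h)]
  · rw [if_neg h]

lemma setZ0_X2 : setZ0 H = H := by
  apply MvPowerSeries.ext; intro m
  rw [coeff_setZ0]
  rcases eq_or_ne (m 1) 0 with h | h
  · rw [if_pos h]
  · rw [if_neg h]
    unfold H
    rw [MvPowerSeries.coeff_X,
      if_neg (by intro hh; apply h; subst hh; simp [single_apply_fin])]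

lemma setW0_pow (F : R3) (n : ℕ) : setW0 (F ^ n) = setW0 F ^ n := by
  induction n with
  | zero => simpa using setW0_one
  | succ n ih => rw [pow_succ, setW0_mul, ih, pow_succ]

lemma setZ0_pow (F : R3) (n : ℕ) : setZ0 (F ^ n) = setZ0 F ^ n := by
  induction n with
  | zero => simpa using setZ0_one
  | succ n ih => rw [pow_succ, setZ0_mul, ih, pow_succ]

lemma setW0_seriesSum (f : ℕ → R3) :
    setW0 (seriesSum f) = seriesSum (fun n => setW0 (f n)) := by
  apply MvPowerSeries.ext; intro m
  rw [coeff_setW0, coeff_seriesSum, coeff_seriesSum]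
  rcases eq_or_ne (m 0) 0 with h | h
  · rw [if_pos h]
    exact Finset.sum_congr rfl fun n _ => by rw [coeff_setW0, if_pos h]
  · rw [if_neg h]
    symm
    exact Finset.sum_eq_zero fun n _ => by rw [coeff_setW0, if_neg h]

lemma setZ0_seriesSum (f : ℕ → R3) :
    setZ0 (seriesSum f) = seriesSum (fun n => setZ0 (f n)) := by
  apply MvPowerSeries.ext; intro m
  rw [coeff_setZ0, coeff_seriesSum, coeff_seriesSum]
  rcases eq_or_ne (m 1) 0 with h | h
  · rw [if_pos h]
    exact Finset.sum_congr rfl fun n _ => by rw [coeff_setZ0, if_pos h]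
  · rw [if_neg h]
    symm
    exact Finset.sum_eq_zero fun n _ => by rw [coeff_setZ0, if_neg h]

lemma setW0_mvExp (S : R3) : setW0 (mvExp S) = mvExp (setW0 S) := by
  rw [mvExp_eq, mvExp_eq, setW0_seriesSum]
  apply congrArg seriesSum
  funext n
  rw [setW0_mul, setW0_C, setW0_pow]

lemma setZ0_mvExp (S : R3) : setZ0 (mvExp S) = mvExp (setZ0 S) := by
  rw [mvExp_eq, mvExp_eq, setZ0_seriesSum]
  apply congrArg seriesSum
  funext n
  rw [setZ0_mul, setZ0_C, setZ0_pow]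

def sm (m : Fin 3 →₀ ℕ) : Fin 3 →₀ ℕ := Finsupp.equivMapDomain (Equiv.swap (0 : Fin 3) 1) m

lemma coeff_swapWZ (m : Fin 3 →₀ ℕ) (F : R3) : cf m (swapWZ F) = cf (sm m) F := rfl

lemma sm_apply (m : Fin 3 →₀ ℕ) (a : Fin 3) : sm m a = m (Equiv.swap (0 : Fin 3) 1 a) := by
  simp [sm, Finsupp.equivMapDomain_apply, Equiv.symm_swap]

lemma sm_add (p q : Fin 3 →₀ ℕ) : sm (p + q) = sm p + sm q := by
  ext a; simp [sm_apply, Finsupp.add_apply]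

lemma sm_sm (m : Fin 3 →₀ ℕ) : sm (sm m) = m := by
  ext a; simp [sm_apply]

lemma deg_sm (m : Fin 3 →₀ ℕ) : deg (sm m) = deg m := by
  simp only [deg, sm_apply]
  have h0 : Equiv.swap (0 : Fin 3) 1 0 = 1 := by simp
  have h1 : Equiv.swap (0 : Fin 3) 1 1 = 0 := by simp
  have h2 : Equiv.swap (0 : Fin 3) 1 2 = 2 := by
    apply Equiv.swap_apply_of_ne_of_ne <;> decide
  rw [h0, h1, h2]; ring

lemma swapWZ_mul (F G : R3) : swapWZ (F * G) = swapWZ F * swapWZ G := by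
  apply MvPowerSeries.ext; intro m
  rw [coeff_swapWZ, MvPowerSeries.coeff_mul, MvPowerSeries.coeff_mul]
  apply Finset.sum_nbij' (i := fun x : (Fin 3 →₀ ℕ) × (Fin 3 →₀ ℕ) => (sm x.1, sm x.2))
    (j := fun x : (Fin 3 →₀ ℕ) × (Fin 3 →₀ ℕ) => (sm x.1, sm x.2))
  · intro x hx
    rw [Finset.HasAntidiagonal.mem_antidiagonal] at *
    rw [← sm_add, hx, sm_sm]
  · intro x hx
    rw [Finset.HasAntidiagonal.mem_antidiagonal] at *
    rw [← sm_add, hx]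
  · intro x _
    calc ((sm (sm x.1), sm (sm x.2)) : _ × _) = (x.1, x.2) := by rw [sm_sm, sm_sm]
      _ = x := rfl
  · intro x _
    calc ((sm (sm x.1), sm (sm x.2)) : _ × _) = (x.1, x.2) := by rw [sm_sm, sm_sm]
      _ = x := rfl
  · intro x _
    rw [coeff_swapWZ, coeff_swapWZ]
    show _ = cf (sm (sm x.1)) F * cf (sm (sm x.2)) G
    rw [sm_sm, sm_sm]

lemma swapWZ_add (F G : R3) : swapWZ (F + G) = swapWZ F + swapWZ G := by
  apply MvPowerSeries.ext; intro m
  rw [map_add, coeff_swapWZ, coeff_swapWZ, coeff_swapWZ, map_add]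

lemma swapWZ_one : swapWZ (1 : R3) = 1 := by
  apply MvPowerSeries.ext; intro m
  rw [coeff_swapWZ, MvPowerSeries.coeff_one, MvPowerSeries.coeff_one]
  have : sm m = 0 ↔ m = 0 := by
    constructor
    · intro h; rw [← sm_sm m, h]; ext a; simp [sm_apply]
    · intro h; subst h; ext a; simp [sm_apply]
  rcases eq_or_ne m 0 with h | h
  · rw [if_pos h, if_pos (this.2 h)]
  · rw [if_neg h, if_neg (fun hh => h (this.1 hh))]

lemma swapWZ_C (r : ℚ) : swapWZ (Cc r) = Cc r := by
  apply MvPowerSeries.ext; intro m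
  rw [coeff_swapWZ, MvPowerSeries.coeff_C, MvPowerSeries.coeff_C]
  have : sm m = 0 ↔ m = 0 := by
    constructor
    · intro h; rw [← sm_sm m, h]; ext a; simp [sm_apply]
    · intro h; subst h; ext a; simp [sm_apply]
  rcases eq_or_ne m 0 with h | h
  · rw [if_pos h, if_pos (this.2 h)]
  · rw [if_neg h, if_neg (fun hh => h (this.1 hh))]

lemma sm_single1 : sm (Finsupp.single (1 : Fin 3) 1) = Finsupp.single (0 : Fin 3) 1 := by
  ext a
  rw [sm_apply]
  fin_cases a <;> simp [Finsupp.single_apply] <;> decide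

lemma sm_single0 : sm (Finsupp.single (0 : Fin 3) 1) = Finsupp.single (1 : Fin 3) 1 := by
  ext a
  rw [sm_apply]
  fin_cases a <;> simp [Finsupp.single_apply] <;> decide

lemma sm_single2 : sm (Finsupp.single (2 : Fin 3) 1) = Finsupp.single (2 : Fin 3) 1 := by
  ext a
  rw [sm_apply]
  fin_cases a <;> simp [Finsupp.single_apply, Equiv.swap_apply_of_ne_of_ne] <;> decide

lemma sm_eq_iff (m p : Fin 3 →₀ ℕ) : sm m = p ↔ m = sm p := by
  constructor
  · intro h; rw [← h, sm_sm]
  · intro h; rw [h, sm_sm]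

lemma swapWZ_X0 : swapWZ W = Z := by
  apply MvPowerSeries.ext; intro m
  rw [coeff_swapWZ]
  unfold W Z
  rw [MvPowerSeries.coeff_X, MvPowerSeries.coeff_X]
  have : sm m = Finsupp.single 0 1 ↔ m = Finsupp.single 1 1 := by
    rw [sm_eq_iff, sm_single0]
  rcases eq_or_ne m (Finsupp.single 1 1) with h | h
  · rw [if_pos (this.2 h), if_pos h]
  · rw [if_neg (fun hh => h (this.1 hh)), if_neg h]

lemma swapWZ_X1 : swapWZ Z = W := by
  apply MvPowerSeries.ext; intro m
  rw [coeff_swapWZ]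
  unfold W Z
  rw [MvPowerSeries.coeff_X, MvPowerSeries.coeff_X]
  have : sm m = Finsupp.single 1 1 ↔ m = Finsupp.single 0 1 := by
    rw [sm_eq_iff, sm_single1]
  rcases eq_or_ne m (Finsupp.single 0 1) with h | h
  · rw [if_pos (this.2 h), if_pos h]
  · rw [if_neg (fun hh => h (this.1 hh)), if_neg h]

lemma swapWZ_X2 : swapWZ H = H := by
  apply MvPowerSeries.ext; intro m
  rw [coeff_swapWZ]
  unfold H
  rw [MvPowerSeries.coeff_X, MvPowerSeries.coeff_X]
  have : sm m = Finsupp.single 2 1 ↔ m = Finsupp.single 2 1 := by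
    rw [sm_eq_iff, sm_single2]
  rcases eq_or_ne m (Finsupp.single 2 1) with h | h
  · rw [if_pos (this.2 h), if_pos h]
  · rw [if_neg (fun hh => h (this.1 hh)), if_neg h]

lemma swapWZ_pow (F : R3) (n : ℕ) : swapWZ (F ^ n) = swapWZ F ^ n := by
  induction n with
  | zero => simpa using swapWZ_one
  | succ n ih => rw [pow_succ, swapWZ_mul, ih, pow_succ]

lemma swapWZ_seriesSum (f : ℕ → R3) :
    swapWZ (seriesSum f) = seriesSum (fun n => swapWZ (f n)) := by
  apply MvPowerSeries.ext; intro m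
  rw [coeff_swapWZ, coeff_seriesSum, coeff_seriesSum, deg_sm]
  rfl

lemma swapWZ_mvExp (S : R3) : swapWZ (mvExp S) = mvExp (swapWZ S) := by
  rw [mvExp_eq, mvExp_eq, swapWZ_seriesSum]
  apply congrArg seriesSum
  funext n
  rw [swapWZ_mul, swapWZ_C, swapWZ_pow]

def yS : R3 := Cc (1 / 2) * W * Z * (W + Z) * H
def cq (n : ℕ) : ℚ := (n.factorial : ℚ) / ((2 * n + 1).factorial : ℚ)
def Bser : R3 := seriesSum fun n => Cc (cq n) * yS ^ n
def Sful : R3 := Cc (1 / 24) * (W ^ 3 + Z ^ 3) * H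
def Eser : R3 := mvExp Sful
def Ew : R3 := mvExp (Cc (1 / 24) * W ^ 3 * H)
def Ez : R3 := mvExp (Cc (1 / 24) * Z ^ 3 * H)

lemma lb_C (r : ℚ) : lb 0 (Cc r : R3) := lb_zero _

lemma lb_WZ : lb 1 (W + Z) := lb_add lb_W lb_Z

lemma lb_2WZ : lb 1 (2 * W + Z) := by
  have h1 : lb 1 ((2 : R3) * W) := by
    have := lb_mul (lb_zero (2 : R3)) lb_W
    simpa using this
  exact lb_add h1 lb_Z

lemma lb_yS : lb 4 yS := by
  have h := lb_mul (lb_mul (lb_mul (lb_mul (lb_C (1/2)) lb_W) lb_Z) lb_WZ) lb_H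
  simpa [yS] using h

lemma lb_Sful : lb 4 Sful := by
  have h3 : lb 3 (W ^ 3 + Z ^ 3) := by
    have hw := lb_pow lb_W 3
    have hz := lb_pow lb_Z 3
    simpa using lb_add (by simpa using hw) (by simpa using hz)
  have h := lb_mul (lb_mul (lb_C (1/24)) h3) lb_H
  simpa [Sful] using h

lemma good_B : Good fun n => (Cc (cq n) : R3) * yS ^ n := by
  intro n
  have := lb_mul (lb_C (cq n)) (lb_pow lb_yS n)
  exact lb_mono (by simpa using this) (by omega)

lemma dW_yS : dW yS = Cc (1 / 2) * (Z * H * (2 * W + Z)) := by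
  unfold yS
  rw [dW_mul (Cc (1/2) * W * Z * (W + Z)) H,
    dW_mul (Cc (1/2) * W * Z) (W + Z),
    dW_mul (Cc (1/2) * W) Z,
    dW_mul (Cc (1/2)) W,
    dW_C, dW_X0, dW_X1, dW_X2, dW_add, dW_X0, dW_X1]
  ring

lemma dW_Sful : dW Sful = Cc (1 / 8) * (W ^ 2 * H) := by
  unfold Sful
  rw [dW_mul (Cc (1/24) * (W ^ 3 + Z ^ 3)) H,
    dW_mul (Cc (1/24)) (W ^ 3 + Z ^ 3),
    dW_C, dW_X2, dW_add, dW_pow W 3, dW_pow Z 3, dW_X0, dW_X1]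
  have hc : (Cc (1/24) : R3) * Cc ((3 : ℕ) : ℚ) = Cc (1/8) := by
    rw [← map_mul]; norm_num
  calc (0 * (W^3 + Z^3) + Cc (1/24) * (Cc ((3:ℕ):ℚ) * (W^(3-1) * 1) + Cc ((3:ℕ):ℚ) * (Z^(3-1) * 0))) * H
        + Cc (1/24) * (W^3 + Z^3) * 0
      = (Cc (1/24) * Cc ((3:ℕ):ℚ)) * (W^2 * H) := by ring
    _ = Cc (1/8) * (W^2 * H) := by rw [hc]

lemma dW_Eser : dW Eser = Cc (1 / 8) * (W ^ 2 * H) * Eser := by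
  unfold Eser
  rw [dW_mvExp (lb_mono lb_Sful (by omega)), dW_Sful]

def fB (n : ℕ) : R3 :=
  Cc (((n : ℚ) + 1) * cq (n + 1)) * (yS ^ n * (Cc (1 / 2) * (Z * H * (2 * W + Z))))

lemma lb_fB (n : ℕ) : lb (4 * n + 3) (fB n) := by
  have h1 : lb 3 ((Cc (1/2) : R3) * (Z * H * (2 * W + Z))) := by
    have := lb_mul (lb_C (1/2)) (lb_mul (lb_mul lb_Z lb_H) lb_2WZ)
    simpa using this
  have := lb_mul (lb_C (((n : ℚ) + 1) * cq (n + 1))) (lb_mul (lb_pow lb_yS n) h1)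
  simpa [fB] using this

lemma good_fB : Good fB := fun n => lb_mono (lb_fB n) (by omega)

lemma dW_Bser : dW Bser = seriesSum fB := by
  unfold Bser
  rw [dW_seriesSum (f := fun n => Cc (cq n) * yS ^ n)
    (by
      intro n hn
      have := lb_mul (lb_C (cq n)) (lb_pow lb_yS n)
      exact lb_mono (by simpa using this) (by omega))]
  symm
  apply seriesSum_shift (f := fB) (g := fun n => dW (Cc (cq n) * yS ^ n))
  · intro n; exact lb_mono (lb_fB n) (by omega)
  · rw [pow_zero, mul_one, dW_C]
  · intro n
    rw [dW_Cmul, dW_pow, Nat.add_sub_cancel, dW_yS]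
    have hc : (Cc (cq (n+1)) : R3) * Cc (((n+1 : ℕ)) : ℚ) = Cc (((n : ℚ) + 1) * cq (n + 1)) := by
      rw [← map_mul]; congr 1; push_cast; ring
    unfold fB
    linear_combination (yS ^ n * (Cc (1/2) * (Z * H * (2 * W + Z)))) * hc

lemma EwEz : Ew * Ez = Eser := by
  unfold Ew Ez Eser
  rw [← mvExp_add
    (by
      have := lb_mul (lb_mul (lb_C (1/24)) (lb_pow lb_W 3)) lb_H
      exact lb_mono (by simpa using this) (by omega))
    (by
      have := lb_mul (lb_mul (lb_C (1/24)) (lb_pow lb_Z 3)) lb_H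
      exact lb_mono (by simpa using this) (by omega))]
  apply congrArg mvExp
  unfold Sful
  ring

lemma setW0_yS : setW0 yS = 0 := by
  unfold yS
  rw [setW0_mul, setW0_mul, setW0_mul, setW0_mul, setW0_C, setW0_X0]
  ring

lemma setZ0_yS : setZ0 yS = 0 := by
  unfold yS
  rw [setZ0_mul, setZ0_mul, setZ0_mul, setZ0_mul, setZ0_C, setZ0_X1]
  ring

lemma cq_zero : cq 0 = 1 := by norm_num [cq, Nat.factorial]

lemma setW0_Bser : setW0 Bser = 1 := by
  unfold Bser
  rw [setW0_seriesSum]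
  have hfun : (fun n => setW0 (Cc (cq n) * yS ^ n)) = fun n => if n = 0 then (1 : R3) else 0 := by
    funext n
    rw [setW0_mul, setW0_C, setW0_pow, setW0_yS]
    cases n with
    | zero => rw [pow_zero, mul_one, cq_zero, map_one]; simp
    | succ n => rw [zero_pow (Nat.succ_ne_zero n), mul_zero]; simp
  rw [hfun, seriesSum_delta]

lemma setZ0_Bser : setZ0 Bser = 1 := by
  unfold Bser
  rw [setZ0_seriesSum]
  have hfun : (fun n => setZ0 (Cc (cq n) * yS ^ n)) = fun n => if n = 0 then (1 : R3) else 0 := by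
    funext n
    rw [setZ0_mul, setZ0_C, setZ0_pow, setZ0_yS]
    cases n with
    | zero => rw [pow_zero, mul_one, cq_zero, map_one]; simp
    | succ n => rw [zero_pow (Nat.succ_ne_zero n), mul_zero]; simp
  rw [hfun, seriesSum_delta]

lemma setW0_Eser : setW0 Eser = Ez := by
  unfold Eser Ez
  rw [setW0_mvExp]
  apply congrArg mvExp
  unfold Sful
  rw [setW0_mul, setW0_mul, setW0_C, setW0_add, setW0_pow, setW0_pow, setW0_X0, setW0_X1,
    setW0_X2]
  ring

lemma setZ0_Eser : setZ0 Eser = Ew := by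
  unfold Eser Ew
  rw [setZ0_mvExp]
  apply congrArg mvExp
  unfold Sful
  rw [setZ0_mul, setZ0_mul, setZ0_C, setZ0_add, setZ0_pow, setZ0_pow, setZ0_X0, setZ0_X1,
    setZ0_X2]
  ring

lemma setW0_EB : setW0 (Eser * Bser) = Ez := by
  rw [setW0_mul, setW0_Eser, setW0_Bser, mul_one]

lemma setZ0_EB : setZ0 (Eser * Bser) = Ew := by
  rw [setZ0_mul, setZ0_Eser, setZ0_Bser, mul_one]

def vF (n : ℕ) : R3 := Cc (((n : ℚ) + 1) * cq (n + 1)) * (yS ^ n * (W * Z * (W + Z) * H))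
def v2F (n : ℕ) : R3 := Cc (2 * (n : ℚ) * cq n) * yS ^ n

lemma lb_M : lb 4 (W * Z * (W + Z) * H) := by
  have := lb_mul (lb_mul (lb_mul lb_W lb_Z) lb_WZ) lb_H
  simpa using this

lemma lb_vF (n : ℕ) : lb (4 * n + 4) (vF n) := by
  have := lb_mul (lb_C (((n : ℚ) + 1) * cq (n + 1))) (lb_mul (lb_pow lb_yS n) lb_M)
  simpa [vF] using this

lemma good_vF : Good vF := fun n => lb_mono (lb_vF n) (by omega)

lemma good_v2F : Good v2F := by
  intro n
  have := lb_mul (lb_C (2 * (n : ℚ) * cq n)) (lb_pow lb_yS n)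
  exact lb_mono (by simpa [v2F] using this) (by omega)

lemma hhalf : (2 : R3) * Cc (1 / 2) = 1 := by
  have h2 : (2 : R3) = Cc 2 := (map_ofNat _ 2).symm
  rw [h2, ← map_mul]
  norm_num

lemma h18 : (2 : R3) * Cc (1 / 8) = Cc (1 / 4) := by
  have h2 : (2 : R3) = Cc 2 := (map_ofNat _ 2).symm
  rw [h2, ← map_mul]
  norm_num

lemma pow_yS_succ (n : ℕ) : yS ^ (n + 1) = Cc (1 / 2) * (yS ^ n * (W * Z * (W + Z) * H)) := by
  rw [pow_succ]
  generalize yS ^ n = P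
  unfold yS
  ring

/-- 2w(w+z)·∑fB = (2w+z)·∑v -/
lemma h2fv : 2 * W * (W + Z) * seriesSum fB = (2 * W + Z) * seriesSum vF := by
  have hL := mul_seriesSum good_fB (2 * W * (W + Z))
  have hR := mul_seriesSum good_vF (2 * W + Z)
  rw [hL, hR]
  apply congrArg seriesSum
  funext n
  unfold fB vF
  linear_combination (Cc (((n : ℚ) + 1) * cq (n + 1)) *
    (yS ^ n * (W * Z * (W + Z) * H * (2 * W + Z)))) * hhalf

/-- reindex v to the power-indexed form v2 -/
lemma hv_shift : seriesSum vF = seriesSum v2F := by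
  apply seriesSum_shift
  · intro n; exact lb_mono (lb_vF n) (by omega)
  · show (Cc (2 * ((0 : ℕ) : ℚ) * cq 0) : R3) * yS ^ 0 = 0
    norm_num
  · intro n
    show (Cc (2 * ((n + 1 : ℕ) : ℚ) * cq (n + 1)) : R3) * yS ^ (n + 1) = vF n
    rw [pow_yS_succ]
    unfold vF
    have hc : (Cc (2 * ((n + 1 : ℕ) : ℚ) * cq (n + 1)) : R3) * Cc (1 / 2)
        = Cc (((n : ℚ) + 1) * cq (n + 1)) := by
      rw [← map_mul]; congr 1; push_cast; ring
    linear_combination (yS ^ n * (W * Z * (W + Z) * H)) * hc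

lemma cq_fact (n : ℕ) : (2 * ((n + 1 : ℕ) : ℚ) + 1) * cq (n + 1) = 1 / 2 * cq n := by
  have h1 : 2 * (n + 1) + 1 = (2 * n + 1) + 1 + 1 := by ring
  unfold cq
  rw [h1, Nat.factorial_succ ((2 * n + 1) + 1), Nat.factorial_succ (2 * n + 1),
    Nat.factorial_succ n]
  have h2 : ((2 * n + 1).factorial : ℚ) ≠ 0 := Nat.cast_ne_zero.2 (2 * n + 1).factorial_ne_zero
  have h3 : (n.factorial : ℚ) ≠ 0 := Nat.cast_ne_zero.2 n.factorial_ne_zero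
  push_cast
  field_simp
  ring

/-- the bracket identity -/
lemma braK : Bser + seriesSum v2F = 1 + Cc (1 / 2) * yS * Bser := by
  -- LHS
  have hLfam : Bser + seriesSum v2F
      = seriesSum (fun n => Cc ((2 * (n : ℚ) + 1) * cq n) * yS ^ n) := by
    unfold Bser
    rw [seriesSum_add]
    apply congrArg seriesSum
    funext n
    unfold v2F
    have hc : (Cc (cq n) : R3) + Cc (2 * (n : ℚ) * cq n) = Cc ((2 * (n : ℚ) + 1) * cq n) := by
      rw [← map_add]; congr 1; ring
    linear_combination (yS ^ n) * hc
  -- RHS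
  have hU : Cc (1 / 2) * yS * Bser
      = seriesSum (fun n => Cc (1 / 2) * yS * (Cc (cq n) * yS ^ n)) := by
    unfold Bser
    exact mul_seriesSum good_B _
  have hshift : seriesSum (fun n => Cc (1 / 2) * yS * (Cc (cq n) * yS ^ n))
      = seriesSum (fun n => Cc ((2 * (n : ℚ) + 1) * cq n) * yS ^ n
          - (if n = 0 then (1 : R3) else 0)) := by
    apply seriesSum_shift
    · intro n
      have h4 : lb (4 * n + 4) ((Cc (1/2) : R3) * yS * (Cc (cq n) * yS ^ n)) := by
        have := lb_mul (lb_mul (lb_C (1/2)) lb_yS) (lb_mul (lb_C (cq n)) (lb_pow lb_yS n))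
        exact lb_mono (by simpa using this) (by omega)
      exact lb_mono h4 (by omega)
    · show (Cc ((2 * ((0 : ℕ) : ℚ) + 1) * cq 0) : R3) * yS ^ 0 - (if (0:ℕ) = 0 then (1:R3) else 0) = 0
      rw [if_pos rfl, pow_zero, mul_one]
      have : ((2 * ((0 : ℕ) : ℚ) + 1) * cq 0) = 1 := by rw [cq_zero]; push_cast; ring
      rw [this, map_one, sub_self]
    · intro n
      show (Cc ((2 * ((n + 1 : ℕ) : ℚ) + 1) * cq (n + 1)) : R3) * yS ^ (n + 1)
          - (if n + 1 = 0 then (1 : R3) else 0)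
        = Cc (1 / 2) * yS * (Cc (cq n) * yS ^ n)
      rw [if_neg (Nat.succ_ne_zero n), sub_zero]
      have hb : (Cc ((2 * ((n + 1 : ℕ) : ℚ) + 1) * cq (n + 1)) : R3)
          = Cc (1 / 2) * Cc (cq n) := by
        rw [← map_mul]; congr 1; exact cq_fact n
      rw [hb, pow_succ]
      ring
  have hdelta : seriesSum (fun n => (if n = 0 then (1 : R3) else 0)) = 1 := seriesSum_delta 1
  have hsub : seriesSum (fun n => Cc ((2 * (n : ℚ) + 1) * cq n) * yS ^ n
          - (if n = 0 then (1 : R3) else 0))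
      = seriesSum (fun n => Cc ((2 * (n : ℚ) + 1) * cq n) * yS ^ n)
        - seriesSum (fun n => (if n = 0 then (1 : R3) else 0)) := by
    apply MvPowerSeries.ext; intro m
    rw [map_sub, coeff_seriesSum, coeff_seriesSum, coeff_seriesSum, ← Finset.sum_sub_distrib]
    exact Finset.sum_congr rfl fun n _ => map_sub _ _ _
  rw [hLfam, hU, hshift, hsub, hdelta]
  ring

lemma yhalf : Cc (1 / 2) * yS = Cc (1 / 4) * (W * Z * (W + Z) * H) := by
  unfold yS
  have hc : (Cc (1/2) : R3) * Cc (1/2) = Cc (1/4) := by rw [← map_mul]; norm_num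
  linear_combination (W * Z * (W + Z) * H) * hc

lemma braK' : Bser + seriesSum v2F = 1 + Cc (1 / 4) * (W * Z * (W + Z) * H) * Bser := by
  rw [braK, yhalf]

/-- Dser satisfies the KdV-type equation. -/
lemma Dheq : 2 * W * dW ((W + Z) * (Eser * Bser)) + (W + Z) * (Eser * Bser) =
    W * (Eser * Bser) + Cc (1 / 4) * (W + Z) ^ 3 * W * H * (Eser * Bser) +
      setZ0 (Eser * Bser) * Z * setW0 (Eser * Bser) +
      2 * W * setZ0 (Eser * Bser) * setW0 (Eser * Bser) := by
  rw [setZ0_EB, setW0_EB]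
  rw [dW_mul (W + Z) (Eser * Bser), dW_mul Eser Bser, dW_add, dW_X0, dW_X1,
    dW_Eser, dW_Bser]
  have h2f : 2 * W * (W + Z) * seriesSum fB = (2 * W + Z) * seriesSum v2F := by
    rw [h2fv, hv_shift]
  linear_combination Eser * h2f + (Eser * (2 * W + Z)) * braK' + (-(Z + 2 * W)) * EwEz +
    (Eser * H * W * Bser * (W + Z) * W ^ 2) * h18

lemma coeff_W_mul (m : Fin 3 →₀ ℕ) (F : R3) :
    cf m (W * F) = if e0 ≤ m then cf (m - e0) F else 0 := by
  unfold W
  rw [MvPowerSeries.X_def, MvPowerSeries.coeff_monomial_mul]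
  show (if e0 ≤ m then (1 : ℚ) * cf (m - e0) F else 0) = _
  split <;> ring

lemma coeff_Z_mul (m : Fin 3 →₀ ℕ) (F : R3) :
    cf m (Z * F) = if e1 ≤ m then cf (m - e1) F else 0 := by
  unfold Z
  rw [MvPowerSeries.X_def, MvPowerSeries.coeff_monomial_mul]
  show (if e1 ≤ m then (1 : ℚ) * cf (m - e1) F else 0) = _
  split <;> ring

lemma e0_le_iff (m : Fin 3 →₀ ℕ) : e0 ≤ m ↔ 1 ≤ m 0 := by
  show Finsupp.single 0 1 ≤ m ↔ _
  exact Finsupp.single_le_iff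

lemma e1_le_iff (m : Fin 3 →₀ ℕ) : e1 ≤ m ↔ 1 ≤ m 1 := by
  show Finsupp.single 1 1 ≤ m ↔ _
  exact Finsupp.single_le_iff

lemma coeff_2WdW (m : Fin 3 →₀ ℕ) (F : R3) :
    cf m (2 * W * dW F) = 2 * (m 0 : ℚ) * cf m F := by
  have hsplit : (2 : R3) * W * dW F = W * dW F + W * dW F := by ring
  rw [hsplit, map_add, coeff_W_mul]
  rcases Classical.em (e0 ≤ m) with h | h
  · rw [if_pos h]
    have h1 : 1 ≤ m 0 := (e0_le_iff m).1 h
    have h2 : (m - e0) 0 = m 0 - 1 := by rw [Finsupp.tsub_apply, e0_at0]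
    have h3 : m - e0 + e0 = m := sub_e0_add m (by omega)
    rw [coeff_dW, h2, h3]
    have h4 : ((m 0 - 1 : ℕ) : ℚ) + 1 = (m 0 : ℚ) := by
      push_cast [Nat.cast_sub h1]; ring
    rw [h4]
    ring
  · have h0 : m 0 = 0 := by
      by_contra hc
      exact h ((e0_le_iff m).2 (by omega))
    rw [if_neg h, h0]
    push_cast
    ring

lemma vanish_mul {Cd : R3} {i : ℕ} (h : ∀ q : Fin 3 →₀ ℕ, q 0 < i → cf q Cd = 0)
    (P : R3) : ∀ m : Fin 3 →₀ ℕ, m 0 < i → cf m (P * Cd) = 0 := by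
  intro m hm
  rw [MvPowerSeries.coeff_mul]
  apply Finset.sum_eq_zero
  intro x hx
  rw [Finset.HasAntidiagonal.mem_antidiagonal] at hx
  have h0 := DFunLike.congr_fun hx 0
  simp only [Finsupp.add_apply] at h0
  rw [h x.2 (by omega), mul_zero]

lemma add_e1_sub (x : Fin 3 →₀ ℕ) : x + e1 - e1 = x := by
  ext a
  simp only [Finsupp.add_apply, Finsupp.tsub_apply]
  omega

lemma Cd_zero {Cd : R3}
    (hCeq : 2 * W * dW ((W + Z) * Cd) + (W + Z) * Cd
      = W * Cd + Cc (1 / 4) * (W + Z) ^ 3 * W * H * Cd) : Cd = 0 := by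
  have main : ∀ i : ℕ, ∀ m : Fin 3 →₀ ℕ, m 0 < i → cf m Cd = 0 := by
    intro i
    induction i with
    | zero => intro m hm; omega
    | succ i ih =>
      intro m hm
      rcases lt_or_ge (m 0) i with hlt | hge
      · exact ih m hlt
      have hmi : m 0 = i := by omega
      have hm'0 : (m + e1) 0 = m 0 := by
        simp only [Finsupp.add_apply, e1_at 0 (by decide)]
        omega
      -- coefficient of W * Cd at m + e1 vanishes
      have hA : cf (m + e1) (W * Cd) = 0 := by
        rw [coeff_W_mul]
        rcases Classical.em (e0 ≤ m + e1) with h | h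
        · rw [if_pos h]
          apply ih
          have h1 : 1 ≤ (m + e1) 0 := (e0_le_iff _).1 h
          rw [Finsupp.tsub_apply, e0_at0]
          omega
        · rw [if_neg h]
      -- coefficient of the h-term at m + e1 vanishes
      have hB : cf (m + e1) (Cc (1 / 4) * (W + Z) ^ 3 * W * H * Cd) = 0 := by
        have hrw : Cc (1 / 4) * (W + Z) ^ 3 * W * H * Cd
            = W * (Cc (1 / 4) * (W + Z) ^ 3 * H * Cd) := by ring
        rw [hrw, coeff_W_mul]
        rcases Classical.em (e0 ≤ m + e1) with h | h
        · rw [if_pos h]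
          have hrw2 : Cc (1 / 4) * (W + Z) ^ 3 * H * Cd
              = (Cc (1 / 4) * (W + Z) ^ 3 * H) * Cd := by ring
          rw [hrw2]
          apply vanish_mul ih
          have h1 : 1 ≤ (m + e1) 0 := (e0_le_iff _).1 h
          rw [Finsupp.tsub_apply, e0_at0]
          omega
        · rw [if_neg h]
      have hc := congrArg (fun F => cf (m + e1) F) hCeq
      rw [map_add, map_add, coeff_2WdW, hA, hB, add_zero] at hc
      have hWZ : cf (m + e1) ((W + Z) * Cd) = cf m Cd := by
        have hsplit : (W + Z) * Cd = W * Cd + Z * Cd := by ring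
        rw [hsplit, map_add, hA, coeff_Z_mul, zero_add,
          if_pos ((e1_le_iff _).2 (by simp only [Finsupp.add_apply, e1_at1]; omega)),
          add_e1_sub]
      rw [hWZ] at hc
      have hpos : (2 * ((m + e1) 0 : ℚ) + 1) ≠ 0 := by positivity
      have : 2 * ((m + e1) 0 : ℚ) * cf m Cd + cf m Cd
          = (2 * ((m + e1) 0 : ℚ) + 1) * cf m Cd := by ring
      rw [this] at hc
      exact (mul_eq_zero.1 hc).resolve_left hpos
  apply MvPowerSeries.ext
  intro m
  rw [map_zero]
  exact main (m 0 + 1) m (Nat.lt_succ_self _)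

lemma setZ0_of_symm {A : R3} (hsymm : swapWZ A = A) (hinit : setW0 A = Ez) :
    setZ0 A = Ew := by
  have h1 : setZ0 A = swapWZ (setW0 A) := by
    apply MvPowerSeries.ext; intro m
    rw [coeff_setZ0, coeff_swapWZ, coeff_setW0]
    have hsm0 : sm m 0 = m 1 := by
      rw [sm_apply]; simp
    rcases eq_or_ne (m 1) 0 with h | h
    · rw [if_pos h, if_pos (by rw [hsm0]; exact h)]
      have h2 : cf (sm m) A = cf m (swapWZ A) := rfl
      rw [h2, hsymm]
    · rw [if_neg h, if_neg (by rw [hsm0]; exact h)]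
  rw [h1, hinit]
  unfold Ez Ew
  rw [swapWZ_mvExp, swapWZ_mul, swapWZ_mul, swapWZ_C, swapWZ_pow, swapWZ_X1, swapWZ_X2]

lemma Dser_eq : Dser = Eser * Bser := rfl

/-- Uniqueness in Dijkgraaf's formula: any series `A(w,z)`, symmetric in `w` and `z`,
with `A(0,z) = exp(z³ℏ/24)`, satisfying the translated KdV equation, equals `D`. -/
theorem Dser_unique (A : R3)
    (hsymm : swapWZ A = A)
    (hinit : setW0 A = mvExp (MvPowerSeries.C (σ := Fin 3) (R := ℚ) (1 / 24) * Z ^ 3 * H))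
    (heq : 2 * W * dW ((W + Z) * A) + (W + Z) * A =
      W * A + MvPowerSeries.C (σ := Fin 3) (R := ℚ) (1 / 4) * (W + Z) ^ 3 * W * H * A +
        setZ0 A * Z * setW0 A + 2 * W * setZ0 A * setW0 A) :
    A = Dser := by
  have hw : setW0 A = Ez := hinit
  have hz : setZ0 A = Ew := setZ0_of_symm hsymm hw
  have hDeq := Dheq
  rw [setZ0_EB, setW0_EB] at hDeq
  have heq' := heq
  rw [hz, hw] at heq'
  have hdw : dW ((W + Z) * (A - Eser * Bser))
      = dW ((W + Z) * A) - dW ((W + Z) * (Eser * Bser)) := by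
    rw [mul_sub, dW_sub]
  have hCeq : 2 * W * dW ((W + Z) * (A - Eser * Bser)) + (W + Z) * (A - Eser * Bser)
      = W * (A - Eser * Bser) + Cc (1 / 4) * (W + Z) ^ 3 * W * H * (A - Eser * Bser) := by
    rw [hdw]
    linear_combination heq' - hDeq
  have hzero := Cd_zero hCeq
  have hA : A = Eser * Bser := sub_eq_zero.1 hzero
  rw [hA, Dser_eq]

end
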